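/- Let h ∈ ℝ^n, let S ⊆ [n] with |S| = k, and partition [n] \ S into consecutive sets T_0, T_1, T_2, … each of size αk, ordered by decreasing |h| (T_0 contains the αk largest coordinates of h outside S, etc.). If ‖h_{S̄}‖_1 ≤ ‖h_S‖_1 + 2‖x_{S̄}‖_1 for some vector x, then for every 1 ≤ p ≤ ∞: Σ_{i ≥ 1} ‖h_{T_i}‖_p ≤ α^{-(1-1/p)} · (‖h_S‖_p + 2‖x_{S̄}‖_1 / k^{1-1/p}). -/

import Mathlib

/-- Shelling bound: if `[n] \ S` is partitioned into consecutive blocks `T_0, T_1, …`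
of size `αk` ordered by decreasing `|h|`, and the cone constraint
`‖h_{S̄}‖₁ ≤ ‖h_S‖₁ + 2‖x_{S̄}‖₁` holds, then for `1 ≤ p < ∞`,
`Σ_{i ≥ 1} ‖h_{T_i}‖_p ≤ α^{-(1-1/p)} (‖h_S‖_p + 2‖x_{S̄}‖₁/k^{1-1/p})`. -/
theorem shelling_bound (n k a : ℕ) (hk : 1 ≤ k) (ha : 1 ≤ a)
    (α : ℝ) (hα : α * k = (a : ℝ))
    (h x : Fin n → ℝ) (S : Finset (Fin n)) (hS : S.card = k)
    (T : ℕ → Finset (Fin n))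
    (hTdisj : ∀ i j, i ≠ j → Disjoint (T i) (T j))
    (hTS : ∀ i, Disjoint S (T i))
    (hTcover : ∀ j : Fin n, j ∉ S → ∃ i, j ∈ T i)
    (hTcard : ∀ i, (T i).card ≤ a)
    (hTfull : ∀ i, (T (i + 1)).Nonempty → (T i).card = a)
    (hTorder : ∀ i, ∀ u ∈ T (i + 1), ∀ v ∈ T i, |h u| ≤ |h v|)
    (p : ℝ) (hp : 1 ≤ p)
    (hcone : ∑ j ∈ Sᶜ, |h j| ≤ ∑ j ∈ S, |h j| + 2 * ∑ j ∈ Sᶜ, |x j|) :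
    ∑' i : ℕ, (∑ j ∈ T (i + 1), |h j| ^ p) ^ (1 / p) ≤
      α ^ (-(1 - 1 / p)) *
        ((∑ j ∈ S, |h j| ^ p) ^ (1 / p) +
          2 * (∑ j ∈ Sᶜ, |x j|) / (k : ℝ) ^ (1 - 1 / p)) := by
  have hp0 : (0:ℝ) < p := lt_of_lt_of_le one_pos hp
  have hip : (0:ℝ) < 1 / p := by positivity
  have hip1 : 1 / p ≤ 1 := by
    rw [div_le_one hp0]; exact hp
  have hq : (0:ℝ) ≤ 1 - 1 / p := by linarith
  have hk0 : (0:ℝ) < (k:ℝ) := by exact_mod_cast hk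
  have ha0 : (0:ℝ) < (a:ℝ) := by exact_mod_cast ha
  have hα0 : 0 < α := by
    have : α = (a:ℝ) / k := by field_simp [hα]; exact hα
    rw [this]; positivity
  -- nonemptiness propagates downward
  have hdown : ∀ i j, j ≤ i → (T i).Nonempty → (T j).Nonempty := by
    intro i
    induction i with
    | zero => intro j hj hne; simpa [Nat.le_zero.mp hj] using hne
    | succ m ih =>
      intro j hj hne
      rcases Nat.le_succ_iff.mp hj with hj' | rfl
      · exact ih j hj' (Finset.card_pos.mp (by rw [hTfull m hne]; exact ha))
      · exact hne
  -- blocks with index ≥ n are empty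
  have hempty : ∀ i, n ≤ i → T i = ∅ := by
    intro i hi
    by_contra hne
    have hne' : (T i).Nonempty := Finset.nonempty_iff_ne_empty.mpr hne
    have hcard : ∀ j ∈ Finset.range (i+1), 1 ≤ (T j).card := by
      intro j hj
      exact Finset.card_pos.mpr (hdown i j (Nat.lt_succ_iff.mp (Finset.mem_range.mp hj)) hne')
    have hB : ((Finset.range (i+1)).biUnion T).card = ∑ j ∈ Finset.range (i+1), (T j).card :=
      Finset.card_biUnion (fun u _ v _ huv => hTdisj u v huv)
    have h1 : i + 1 ≤ ((Finset.range (i+1)).biUnion T).card := by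
      rw [hB]
      calc i + 1 = ∑ _j ∈ Finset.range (i+1), 1 := by simp
        _ ≤ ∑ j ∈ Finset.range (i+1), (T j).card := Finset.sum_le_sum hcard
    have h2 : ((Finset.range (i+1)).biUnion T).card ≤ n := by
      have := Finset.card_le_card (Finset.subset_univ ((Finset.range (i+1)).biUnion T))
      simpa [Finset.card_univ] using this
    omega
  set f : ℕ → ℝ := fun i => (∑ j ∈ T (i + 1), |h j| ^ p) ^ (1 / p) with hf
  have hfzero : ∀ i ∉ Finset.range n, f i = 0 := by
    intro i hi
    have : T (i+1) = ∅ := hempty (i+1) (by simp at hi; omega)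
    simp only [hf, this, Finset.sum_empty]
    exact Real.zero_rpow (ne_of_gt hip)
  have htsum : ∑' i : ℕ, f i = ∑ i ∈ Finset.range n, f i := tsum_eq_sum hfzero
  -- per-block bound
  have hblock : ∀ i, f i ≤ (a:ℝ) ^ (1/p - 1) * ∑ j ∈ T i, |h j| := by
    intro i
    rcases Finset.eq_empty_or_nonempty (T (i+1)) with he | hne
    · rw [hf]
      simp only [he, Finset.sum_empty, Real.zero_rpow (ne_of_gt hip)]
      have : (0:ℝ) ≤ ∑ j ∈ T i, |h j| := Finset.sum_nonneg fun j _ => abs_nonneg _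
      positivity
    · set S1 : ℝ := ∑ j ∈ T i, |h j| with hS1
      have hS1nn : 0 ≤ S1 := Finset.sum_nonneg fun j _ => abs_nonneg _
      have hcard : (T i).card = a := hTfull i hne
      have hub : ∀ u ∈ T (i+1), |h u| ≤ S1 / a := by
        intro u hu
        rw [le_div_iff₀ ha0]
        calc |h u| * a = ∑ _v ∈ T i, |h u| := by
              rw [Finset.sum_const, hcard]; ring
          _ ≤ S1 := Finset.sum_le_sum fun v hv => hTorder i u hu v hv
      have hsum : ∑ j ∈ T (i+1), |h j| ^ p ≤ (a:ℝ) * (S1 / a) ^ p := by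
        calc ∑ j ∈ T (i+1), |h j| ^ p ≤ ∑ _j ∈ T (i+1), (S1 / a) ^ p :=
              Finset.sum_le_sum fun j hj =>
                Real.rpow_le_rpow (abs_nonneg _) (hub j hj) (le_of_lt hp0)
          _ = (T (i+1)).card * (S1 / a) ^ p := by rw [Finset.sum_const]; ring
          _ ≤ (a:ℝ) * (S1 / a) ^ p := by
              apply mul_le_mul_of_nonneg_right _ (Real.rpow_nonneg (by positivity) _)
              exact_mod_cast hTcard (i+1)
      have hLHS : f i ≤ ((a:ℝ) * (S1 / a) ^ p) ^ (1/p) := by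
        apply Real.rpow_le_rpow (Finset.sum_nonneg fun j _ =>
          Real.rpow_nonneg (abs_nonneg _) _) hsum (le_of_lt hip)
      calc f i ≤ ((a:ℝ) * (S1 / a) ^ p) ^ (1/p) := hLHS
        _ = (a:ℝ) ^ (1/p) * (S1 / a) := by
            rw [Real.mul_rpow (le_of_lt ha0) (Real.rpow_nonneg (by positivity) _),
              ← Real.rpow_mul (by positivity : (0:ℝ) ≤ S1 / ↑a), mul_one_div,
              div_self (ne_of_gt hp0), Real.rpow_one]
        _ = (a:ℝ) ^ (1/p - 1) * S1 := by
            rw [Real.rpow_sub ha0, Real.rpow_one]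
            field_simp
  -- sum over blocks ≤ sum over Sᶜ
  have hblocksum : ∑ i ∈ Finset.range n, ∑ j ∈ T i, |h j| ≤ ∑ j ∈ Sᶜ, |h j| := by
    rw [← Finset.sum_biUnion (fun u _ v _ huv => hTdisj u v huv)]
    apply Finset.sum_le_sum_of_subset_of_nonneg
    · intro j hj
      rcases Finset.mem_biUnion.mp hj with ⟨i, _, hji⟩
      simp only [Finset.mem_compl]
      exact fun hjS => Finset.disjoint_left.mp (hTS i) hjS hji
    · exact fun j _ _ => abs_nonneg _
  -- Hölder on S
  set P : ℝ := (∑ j ∈ S, |h j| ^ p) ^ (1/p) with hP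
  have hholder : ∑ j ∈ S, |h j| ≤ (k:ℝ) ^ (1 - 1/p) * P := by
    have := Real.arith_mean_le_rpow_mean S (fun _ => 1 / (k:ℝ)) (fun j => |h j|)
      (fun i _ => by positivity) (by rw [Finset.sum_const, hS, nsmul_eq_mul]; field_simp)
      (fun i _ => abs_nonneg _) hp
    have heq1 : ∑ j ∈ S, 1 / (k:ℝ) * |h j| = (1/(k:ℝ)) * ∑ j ∈ S, |h j| := by
      rw [Finset.mul_sum]
    have heq2 : ∑ j ∈ S, 1 / (k:ℝ) * |h j| ^ p = (1/(k:ℝ)) * ∑ j ∈ S, |h j| ^ p := by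
      rw [Finset.mul_sum]
    rw [heq1, heq2] at this
    have hsnn : (0:ℝ) ≤ ∑ j ∈ S, |h j| ^ p :=
      Finset.sum_nonneg fun j _ => Real.rpow_nonneg (abs_nonneg _) _
    have hmr : ((1/(k:ℝ)) * ∑ j ∈ S, |h j| ^ p) ^ (1/p)
        = (1/(k:ℝ)) ^ (1/p) * P := by
      rw [Real.mul_rpow (by positivity) hsnn]
    rw [hmr] at this
    have h2 : ∑ j ∈ S, |h j| ≤ (k:ℝ) * ((1/(k:ℝ)) ^ (1/p) * P) := by
      have h3 := mul_le_mul_of_nonneg_left this (le_of_lt hk0)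
      calc ∑ j ∈ S, |h j| = (k:ℝ) * (1/(k:ℝ) * ∑ j ∈ S, |h j|) := by
            field_simp
        _ ≤ (k:ℝ) * ((1/(k:ℝ)) ^ (1/p) * P) := h3
    calc ∑ j ∈ S, |h j| ≤ (k:ℝ) * ((1/(k:ℝ)) ^ (1/p) * P) := h2
      _ = (k:ℝ) ^ (1 - 1/p) * P := by
          rw [Real.div_rpow (by norm_num) (le_of_lt hk0), Real.one_rpow,
            Real.rpow_sub hk0, Real.rpow_one]
          field_simp
  set X : ℝ := ∑ j ∈ Sᶜ, |x j| with hX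
  have hXnn : 0 ≤ X := Finset.sum_nonneg fun j _ => abs_nonneg _
  have hPnn : 0 ≤ P := Real.rpow_nonneg (Finset.sum_nonneg fun j _ =>
    Real.rpow_nonneg (abs_nonneg _) _) _
  -- put it together
  have hmain : ∑' i : ℕ, f i ≤ (a:ℝ) ^ (1/p - 1) * ((k:ℝ) ^ (1 - 1/p) * P + 2 * X) := by
    rw [htsum]
    calc ∑ i ∈ Finset.range n, f i
        ≤ ∑ i ∈ Finset.range n, (a:ℝ) ^ (1/p - 1) * ∑ j ∈ T i, |h j| :=
          Finset.sum_le_sum fun i _ => hblock i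
      _ = (a:ℝ) ^ (1/p - 1) * ∑ i ∈ Finset.range n, ∑ j ∈ T i, |h j| := by
          rw [Finset.mul_sum]
      _ ≤ (a:ℝ) ^ (1/p - 1) * ∑ j ∈ Sᶜ, |h j| := by
          apply mul_le_mul_of_nonneg_left hblocksum (Real.rpow_nonneg (le_of_lt ha0) _)
      _ ≤ (a:ℝ) ^ (1/p - 1) * ((k:ℝ) ^ (1 - 1/p) * P + 2 * X) := by
          apply mul_le_mul_of_nonneg_left _ (Real.rpow_nonneg (le_of_lt ha0) _)
          calc ∑ j ∈ Sᶜ, |h j| ≤ ∑ j ∈ S, |h j| + 2 * X := hcone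
            _ ≤ (k:ℝ) ^ (1 - 1/p) * P + 2 * X := by linarith [hholder]
  -- final algebra
  have hfinal : (a:ℝ) ^ (1/p - 1) * ((k:ℝ) ^ (1 - 1/p) * P + 2 * X)
      = α ^ (-(1 - 1/p)) * (P + 2 * X / (k:ℝ) ^ (1 - 1/p)) := by
    have hkq : (0:ℝ) < (k:ℝ) ^ (1 - 1/p) := Real.rpow_pos_of_pos hk0 _
    have key : ∀ (B K Q Y : ℝ), K ≠ 0 → B * K⁻¹ * (K * Q + 2 * Y) = B * (Q + 2 * Y / K) := by
      intro B K Q Y hK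
      have hKK : K⁻¹ * K = 1 := inv_mul_cancel₀ hK
      calc B * K⁻¹ * (K * Q + 2 * Y) = B * ((K⁻¹ * K) * Q + K⁻¹ * (2 * Y)) := by ring
        _ = B * (Q + 2 * Y / K) := by rw [hKK, div_eq_mul_inv]; ring
    rw [show (1/p - 1 : ℝ) = -(1 - 1/p) by ring, ← hα,
      Real.mul_rpow (le_of_lt hα0) (le_of_lt hk0),
      Real.rpow_neg (le_of_lt hk0) (1 - 1/p)]
    exact key _ _ _ _ (ne_of_gt hkq)
  rw [← hfinal]
  exact hmain
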